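/- For every finite connected weighted graph G, the second smallest eigenvalue λ₂ of the normalized Laplacian L = I − D^{−1/2} A D^{−1/2} satisfies λ₂ ≥ 2/(vol(V)·R_diam), where R_diam is the maximum effective resistance between pairs of vertices and vol(V) = ∑_x w(x). -/

import Mathlib

open Matrix

/-- Energy of `f` on the weighted graph with weight matrix `W` (sum over unordered pairs). -/
noncomputable def energyW {n : ℕ} (W : Matrix (Fin n) (Fin n) ℝ) (f : Fin n → ℝ) : ℝ :=
  (∑ x, ∑ y, W x y * (f x - f y) ^ 2) / 2

/-- Effective conductance between `s` and `t`. -/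
noncomputable def Ceff {n : ℕ} (W : Matrix (Fin n) (Fin n) ℝ) (s t : Fin n) : ℝ :=
  sInf {q | ∃ f : Fin n → ℝ, f s ≠ f t ∧ q = energyW W f / (f s - f t) ^ 2}

/-- Effective resistance between `s` and `t`. -/
noncomputable def Reff {n : ℕ} (W : Matrix (Fin n) (Fin n) ℝ) (s t : Fin n) : ℝ :=
  (Ceff W s t)⁻¹

/-- The normalized Laplacian `I - D^{-1/2} A D^{-1/2}` of the weighted graph `W`. -/
noncomputable def normLap {n : ℕ} (W : Matrix (Fin n) (Fin n) ℝ) :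
    Matrix (Fin n) (Fin n) ℝ :=
  Matrix.of fun x y =>
    (if x = y then (1 : ℝ) else 0) -
      W x y / (Real.sqrt (∑ z, W x z) * Real.sqrt (∑ z, W y z))

lemma energy_expand {n : ℕ} (W : Matrix (Fin n) (Fin n) ℝ) (hsym : ∀ x y, W x y = W y x)
    (f : Fin n → ℝ) :
    energyW W f = (∑ x, (∑ z, W x z) * f x ^ 2) - ∑ x, ∑ y, W x y * (f x * f y) := by
  unfold energyW
  have inner : ∀ x : Fin n, ∑ y, W x y * (f x - f y) ^ 2
      = (∑ y, W x y * f x ^ 2) + (∑ y, W x y * f y ^ 2)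
        - 2 * ∑ y, W x y * (f x * f y) := by
    intro x
    rw [show (∑ y, W x y * (f x - f y) ^ 2)
        = ∑ y, (W x y * f x ^ 2 + W x y * f y ^ 2 - 2 * (W x y * (f x * f y))) from
      Finset.sum_congr rfl fun y _ => by ring]
    rw [Finset.sum_sub_distrib, Finset.sum_add_distrib, ← Finset.mul_sum]
  have key : ∑ x, ∑ y, W x y * (f x - f y) ^ 2
      = (∑ x, ∑ y, W x y * f x ^ 2) + (∑ x, ∑ y, W x y * f y ^ 2)
        - 2 * ∑ x, ∑ y, W x y * (f x * f y) := by
    rw [Finset.sum_congr rfl fun x _ => inner x]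
    rw [Finset.sum_sub_distrib, Finset.sum_add_distrib, ← Finset.mul_sum]
  have h2 : ∑ x, ∑ y, W x y * f y ^ 2 = ∑ x, ∑ y, W x y * f x ^ 2 := by
    rw [Finset.sum_comm]
    exact Finset.sum_congr rfl fun x _ => Finset.sum_congr rfl fun y _ => by rw [hsym]
  have h3 : ∑ x : Fin n, ∑ y, W x y * f x ^ 2 = ∑ x, (∑ z, W x z) * f x ^ 2 :=
    Finset.sum_congr rfl fun x _ => by rw [Finset.sum_mul]
  rw [key, h2, h3]; ring

lemma quadForm {n : ℕ} (W : Matrix (Fin n) (Fin n) ℝ) (hsym : ∀ x y, W x y = W y x)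
    (hnn : ∀ x y, 0 ≤ W x y) (hd : ∀ x, 0 < ∑ z, W x z) (v : Fin n → ℝ) :
    v ⬝ᵥ (normLap W *ᵥ v) = energyW W (fun x => v x / Real.sqrt (∑ z, W x z)) := by
  set f : Fin n → ℝ := fun x => v x / Real.sqrt (∑ z, W x z) with hf
  have hs : ∀ x, 0 < Real.sqrt (∑ z, W x z) := fun x => Real.sqrt_pos.2 (hd x)
  have hv : ∀ x, v x = f x * Real.sqrt (∑ z, W x z) := fun x =>
    (div_mul_cancel₀ (v x) (hs x).ne').symm
  have hsq : ∀ x, v x ^ 2 = (∑ z, W x z) * f x ^ 2 := fun x => by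
    rw [hv x, mul_pow, Real.sq_sqrt (hd x).le]; ring
  rw [energy_expand W hsym f]
  have lhs : v ⬝ᵥ (normLap W *ᵥ v)
      = ∑ x, (v x ^ 2 - ∑ y, W x y / (Real.sqrt (∑ z, W x z) * Real.sqrt (∑ z, W y z)) * v y * v x) := by
    simp only [dotProduct, Matrix.mulVec, normLap, Matrix.of_apply]
    refine Finset.sum_congr rfl fun x _ => ?_
    rw [show (∑ y, ((if x = y then (1:ℝ) else 0) - W x y / (Real.sqrt (∑ z, W x z) * Real.sqrt (∑ z, W y z))) * v y)
        = (∑ y, (if x = y then (1:ℝ) else 0) * v y)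
          - ∑ y, W x y / (Real.sqrt (∑ z, W x z) * Real.sqrt (∑ z, W y z)) * v y from by
      rw [← Finset.sum_sub_distrib]; exact Finset.sum_congr rfl fun y _ => by ring]
    simp only [ite_mul, one_mul, zero_mul, Finset.sum_ite_eq, Finset.mem_univ, if_true]
    rw [← Finset.sum_mul]; ring
  rw [lhs]
  have term : ∀ x y : Fin n,
      W x y / (Real.sqrt (∑ z, W x z) * Real.sqrt (∑ z, W y z)) * v y * v x
      = W x y * (f x * f y) := by
    intro x y
    show _ = W x y * (v x / Real.sqrt (∑ z, W x z) * (v y / Real.sqrt (∑ z, W y z)))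
    field_simp
  rw [Finset.sum_sub_distrib]
  congr 1
  · exact Finset.sum_congr rfl fun x _ => hsq x
  · exact Finset.sum_congr rfl fun x _ => Finset.sum_congr rfl fun y _ => term x y

lemma normLap_sqrtdeg {n : ℕ} (W : Matrix (Fin n) (Fin n) ℝ) (hd : ∀ x, 0 < ∑ z, W x z) :
    normLap W *ᵥ (fun x => Real.sqrt (∑ z, W x z)) = 0 := by
  funext x
  have hs : ∀ x, 0 < Real.sqrt (∑ z, W x z) := fun x => Real.sqrt_pos.2 (hd x)
  simp only [Matrix.mulVec, dotProduct, normLap, Matrix.of_apply, Pi.zero_apply]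
  have expand : ∀ y : Fin n,
      ((if x = y then (1:ℝ) else 0) - W x y / (Real.sqrt (∑ z, W x z) * Real.sqrt (∑ z, W y z)))
        * Real.sqrt (∑ z, W y z)
      = (if x = y then (1:ℝ) else 0) * Real.sqrt (∑ z, W y z)
        - W x y / Real.sqrt (∑ z, W x z) := by
    intro y
    rw [sub_mul]
    congr 1
    rw [div_mul_eq_mul_div, mul_comm (Real.sqrt _) (Real.sqrt _), ← div_div,
      mul_div_assoc, div_self (hs y).ne', mul_one]
  rw [Finset.sum_congr rfl fun y _ => expand y, Finset.sum_sub_distrib]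
  simp only [ite_mul, one_mul, zero_mul, Finset.sum_ite_eq, Finset.mem_univ, if_true]
  rw [← Finset.sum_div, Real.div_sqrt, sub_self]

lemma energy_nonneg {n : ℕ} (W : Matrix (Fin n) (Fin n) ℝ) (hnn : ∀ x y, 0 ≤ W x y)
    (f : Fin n → ℝ) : 0 ≤ energyW W f := by
  unfold energyW
  apply div_nonneg _ (by norm_num)
  exact Finset.sum_nonneg fun x _ => Finset.sum_nonneg fun y _ =>
    mul_nonneg (hnn x y) (sq_nonneg _)

lemma const_of_energy_zero {n : ℕ} (W : Matrix (Fin n) (Fin n) ℝ)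
    (hsym : ∀ x y, W x y = W y x) (hnn : ∀ x y, 0 ≤ W x y)
    (hconn : (SimpleGraph.fromRel fun x y => W x y ≠ 0).Connected)
    (f : Fin n → ℝ) (h : energyW W f = 0) : ∀ x y, f x = f y := by
  have hterm : ∀ x y, W x y * (f x - f y) ^ 2 = 0 := by
    have hsum : ∑ x, ∑ y, W x y * (f x - f y) ^ 2 = 0 := by
      unfold energyW at h; linarith
    intro x y
    have h1 := (Finset.sum_eq_zero_iff_of_nonneg (fun x _ => Finset.sum_nonneg fun y _ =>
      mul_nonneg (hnn _ _) (sq_nonneg _))).1 hsum x (Finset.mem_univ x)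
    exact (Finset.sum_eq_zero_iff_of_nonneg (fun y _ =>
      mul_nonneg (hnn _ _) (sq_nonneg _))).1 h1 y (Finset.mem_univ y)
  have hadj : ∀ x y, (SimpleGraph.fromRel fun x y => W x y ≠ 0).Adj x y → f x = f y := by
    intro x y hxy
    rw [SimpleGraph.fromRel_adj] at hxy
    have hW : W x y ≠ 0 := by
      rcases hxy.2 with h' | h'
      · exact h'
      · rw [hsym]; exact h'
    have ht := hterm x y
    have hsq : (f x - f y) ^ 2 = 0 := by
      rcases mul_eq_zero.1 ht with h' | h'
      · exact absurd h' hW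
      · exact h'
    have := pow_eq_zero_iff (n := 2) (by norm_num) |>.1 hsq
    linarith [this]
  intro x y
  obtain ⟨w⟩ := hconn.preconnected x y
  induction w with
  | nil => rfl
  | cons h p ih => exact (hadj _ _ h).trans ih

lemma deg_pos {n : ℕ} (hn : 2 ≤ n) (W : Matrix (Fin n) (Fin n) ℝ)
    (hsym : ∀ x y, W x y = W y x) (hnn : ∀ x y, 0 ≤ W x y)
    (hconn : (SimpleGraph.fromRel fun x y => W x y ≠ 0).Connected) :
    ∀ x, 0 < ∑ z, W x z := by
  intro x
  obtain ⟨y, hxy⟩ : ∃ y : Fin n, y ≠ x := by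
    rcases eq_or_ne x ⟨0, by omega⟩ with h | h
    · exact ⟨⟨1, by omega⟩, by rw [h]; simp [Fin.ext_iff]⟩
    · exact ⟨⟨0, by omega⟩, Ne.symm h⟩
  obtain ⟨w⟩ := hconn.preconnected x y
  cases w with
  | nil => exact absurd rfl hxy
  | cons h p =>
    rename_i m
    rw [SimpleGraph.fromRel_adj] at h
    have hW : W x m ≠ 0 := by
      rcases h.2 with h' | h'
      · exact h'
      · rw [hsym]; exact h'
    calc (0:ℝ) < W x m := lt_of_le_of_ne (hnn _ _) (Ne.symm hW)
      _ ≤ ∑ z, W x z := Finset.single_le_sum (fun i _ => hnn x i) (Finset.mem_univ _)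

lemma walk_bound {n : ℕ} {G : SimpleGraph (Fin n)} (g : Fin n → ℝ) (B : ℝ)
    (hadj : ∀ x y, G.Adj x y → |g x - g y| ≤ B) :
    ∀ {a b : Fin n} (p : G.Walk a b), |g a - g b| ≤ p.length * B := by
  intro a b p
  induction p with
  | nil => simp
  | cons h p ih =>
    rename_i u m b
    rw [SimpleGraph.Walk.length_cons]
    calc |g u - g b| ≤ |g u - g m| + |g m - g b| := abs_sub_le _ _ _
      _ ≤ B + p.length * B := add_le_add (hadj _ _ h) ih
      _ = (↑(p.length + 1)) * B := by push_cast; ring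

lemma edge_term_le_energy {n : ℕ} (W : Matrix (Fin n) (Fin n) ℝ)
    (hsym : ∀ x y, W x y = W y x) (hnn : ∀ x y, 0 ≤ W x y) (g : Fin n → ℝ)
    {x y : Fin n} (hxy : x ≠ y) : W x y * (g x - g y) ^ 2 ≤ energyW W g := by
  unfold energyW
  have hpair : W x y * (g x - g y) ^ 2 + W y x * (g y - g x) ^ 2
      = ∑ p ∈ ({(x,y),(y,x)} : Finset (Fin n × Fin n)), W p.1 p.2 * (g p.1 - g p.2) ^ 2 := by
    rw [Finset.sum_pair (by simp [Prod.ext_iff]; intro h; exact absurd h hxy)]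
  have hsub : ∑ p ∈ ({(x,y),(y,x)} : Finset (Fin n × Fin n)), W p.1 p.2 * (g p.1 - g p.2) ^ 2
      ≤ ∑ p ∈ Finset.univ ×ˢ Finset.univ, W p.1 p.2 * (g p.1 - g p.2) ^ 2 := by
    apply Finset.sum_le_sum_of_subset_of_nonneg
    · intro p _; simp
    · intro p _ _; exact mul_nonneg (hnn _ _) (sq_nonneg _)
  have hprod : ∑ p ∈ Finset.univ ×ˢ Finset.univ, W p.1 p.2 * (g p.1 - g p.2) ^ 2
      = ∑ x, ∑ y, W x y * (g x - g y) ^ 2 := Finset.sum_product _ _ _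
  have hWyx : W y x * (g y - g x) ^ 2 = W x y * (g x - g y) ^ 2 := by
    rw [← hsym]; ring
  nlinarith [hpair, hsub, hprod]

lemma Ceff_lb {n : ℕ} (W : Matrix (Fin n) (Fin n) ℝ)
    (hsym : ∀ x y, W x y = W y x) (hnn : ∀ x y, 0 ≤ W x y)
    (hconn : (SimpleGraph.fromRel fun x y => W x y ≠ 0).Connected)
    {a b : Fin n} (hab : a ≠ b) :
    ∃ ε > 0, ∀ g : Fin n → ℝ, g a ≠ g b → ε ≤ energyW W g / (g a - g b) ^ 2 := by
  obtain ⟨w⟩ := hconn.preconnected a b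
  have hlen : w.length ≠ 0 := fun h => hab (SimpleGraph.Walk.eq_of_length_eq_zero h)
  have hedge : ∃ x y : Fin n, W x y ≠ 0 := by
    obtain ⟨w'⟩ := hconn.preconnected a b
    cases w' with
    | nil => exact absurd rfl hab
    | cons h p =>
      rw [SimpleGraph.fromRel_adj] at h
      rcases h.2 with h' | h'
      · exact ⟨_, _, h'⟩
      · exact ⟨_, _, h'⟩
  set S : Finset (Fin n × Fin n) := Finset.univ.filter (fun p => W p.1 p.2 ≠ 0) with hSdef
  have hS : S.Nonempty := by
    obtain ⟨x, y, hxy⟩ := hedge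
    exact ⟨(x, y), Finset.mem_filter.2 ⟨Finset.mem_univ _, hxy⟩⟩
  set wmin : ℝ := S.inf' hS (fun p => W p.1 p.2) with hwmin
  have hwpos : 0 < wmin := by
    obtain ⟨p, hpS, hpe⟩ := Finset.exists_mem_eq_inf' hS (fun p => W p.1 p.2)
    rw [hwmin, hpe]
    exact lt_of_le_of_ne (hnn _ _) (Ne.symm (Finset.mem_filter.1 hpS).2)
  have hwle : ∀ x y, W x y ≠ 0 → wmin ≤ W x y := by
    intro x y h
    have hmem : (x, y) ∈ S := by
      rw [hSdef]; exact Finset.mem_filter.2 ⟨Finset.mem_univ _, h⟩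
    exact Finset.inf'_le _ hmem
  have hlenR : (0:ℝ) < (w.length : ℝ) ^ 2 := by
    have : (w.length : ℝ) ≠ 0 := Nat.cast_ne_zero.2 hlen
    positivity
  refine ⟨wmin / (w.length : ℝ) ^ 2, by positivity, ?_⟩
  intro g hg
  set E := energyW W g with hEdef
  have hE0 : 0 ≤ E := energy_nonneg W hnn g
  set B := Real.sqrt (E / wmin) with hB
  have hadj : ∀ x y, (SimpleGraph.fromRel fun x y => W x y ≠ 0).Adj x y → |g x - g y| ≤ B := by
    intro x y h
    rw [SimpleGraph.fromRel_adj] at h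
    have hW : W x y ≠ 0 := by
      rcases h.2 with h' | h'
      · exact h'
      · rw [hsym]; exact h'
    have h1 : wmin * (g x - g y) ^ 2 ≤ E :=
      le_trans (mul_le_mul_of_nonneg_right (hwle x y hW) (sq_nonneg _))
        (edge_term_le_energy W hsym hnn g h.1)
    have h2 : (g x - g y) ^ 2 ≤ E / wmin := (le_div_iff₀' hwpos).2 h1
    calc |g x - g y| = Real.sqrt ((g x - g y) ^ 2) := (Real.sqrt_sq_eq_abs _).symm
      _ ≤ B := Real.sqrt_le_sqrt h2
  have hb : |g a - g b| ≤ (w.length : ℝ) * B := walk_bound g B hadj w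
  have hq : (g a - g b) ^ 2 ≤ (w.length : ℝ) ^ 2 * (E / wmin) := by
    have h3 : |g a - g b| ^ 2 ≤ ((w.length : ℝ) * B) ^ 2 :=
      pow_le_pow_left₀ (abs_nonneg _) hb 2
    rw [sq_abs] at h3
    calc (g a - g b) ^ 2 ≤ ((w.length : ℝ) * B) ^ 2 := h3
      _ = (w.length : ℝ) ^ 2 * (E / wmin) := by
          rw [mul_pow, hB, Real.sq_sqrt (div_nonneg hE0 hwpos.le)]
  have hqpos : 0 < (g a - g b) ^ 2 := by
    have : g a - g b ≠ 0 := sub_ne_zero.2 hg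
    positivity
  rw [div_le_div_iff₀ hlenR hqpos]
  calc wmin * (g a - g b) ^ 2 ≤ wmin * ((w.length : ℝ) ^ 2 * (E / wmin)) :=
        mul_le_mul_of_nonneg_left hq hwpos.le
    _ = E * (w.length : ℝ) ^ 2 := by field_simp

set_option maxHeartbeats 1000000 in
theorem stmt4 {n : ℕ} (hn : 2 ≤ n) (W : Matrix (Fin n) (Fin n) ℝ)
    (hsym : ∀ x y, W x y = W y x) (hnn : ∀ x y, 0 ≤ W x y) (hloop : ∀ x, W x x = 0)
    (hconn : (SimpleGraph.fromRel fun x y => W x y ≠ 0).Connected)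
    (hL : (normLap W).IsHermitian)
    (lam : Fin n → ℝ) (hmono : Monotone lam)
    (hperm : ∃ σ : Equiv.Perm (Fin n), lam = hL.eigenvalues ∘ σ) :
    2 / ((∑ x, ∑ y, W x y) * sSup {r | ∃ s t : Fin n, r = Reff W s t})
      ≤ lam ⟨1, by omega⟩ := by
  obtain ⟨σ, hσ⟩ := hperm
  have hn0 : 0 < n := by omega
  have hn1 : 1 < n := by omega
  have hd : ∀ x, 0 < ∑ z, W x z := deg_pos hn W hsym hnn hconn
  have hs : ∀ x, 0 < Real.sqrt (∑ z, W x z) := fun x => Real.sqrt_pos.2 (hd x)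
  set i0 : Fin n := ⟨0, hn0⟩ with hi0
  set i1 : Fin n := ⟨1, hn1⟩ with hi1
  set u : Fin n → ℝ := (WithLp.equiv 2 _) (hL.eigenvectorBasis (σ i0)) with hu
  set v : Fin n → ℝ := (WithLp.equiv 2 _) (hL.eigenvectorBasis (σ i1)) with hv
  have heigu : normLap W *ᵥ u = lam i0 • u := by
    rw [hu, hσ]; exact hL.mulVec_eigenvectorBasis (σ i0)
  have heigv : normLap W *ᵥ v = lam i1 • v := by
    rw [hv, hσ]; exact hL.mulVec_eigenvectorBasis (σ i1)
  have horthoB := hL.eigenvectorBasis.orthonormal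
  rw [orthonormal_iff_ite] at horthoB
  have hvnorm : ∑ k, v k * v k = 1 := by
    have h2 := horthoB (σ i1) (σ i1)
    simp only [if_pos rfl, PiLp.inner_apply, RCLike.inner_apply, conj_trivial] at h2
    exact h2
  have hunorm : ∑ k, u k * u k = 1 := by
    have h2 := horthoB (σ i0) (σ i0)
    simp only [if_pos rfl, PiLp.inner_apply, RCLike.inner_apply, conj_trivial] at h2
    exact h2
  have huv : ∑ k, u k * v k = 0 := by
    have hne : σ i0 ≠ σ i1 := by
      intro h
      have := σ.injective h
      rw [hi0, hi1] at this
      exact absurd (congrArg Fin.val this) (by norm_num)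
    have h2 := horthoB (σ i0) (σ i1)
    rw [if_neg hne] at h2
    simp only [PiLp.inner_apply, RCLike.inner_apply, conj_trivial] at h2
    rw [← h2]; exact Finset.sum_congr rfl fun k _ => mul_comm _ _
  -- Rayleigh quotients
  set fv : Fin n → ℝ := fun x => v x / Real.sqrt (∑ z, W x z) with hfv
  set fu : Fin n → ℝ := fun x => u x / Real.sqrt (∑ z, W x z) with hfu
  have hvfv : ∀ x, v x = fv x * Real.sqrt (∑ z, W x z) := fun x =>
    (div_mul_cancel₀ (v x) (hs x).ne').symm
  have hufu : ∀ x, u x = fu x * Real.sqrt (∑ z, W x z) := fun x =>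
    (div_mul_cancel₀ (u x) (hs x).ne').symm
  have hEv : energyW W fv = lam i1 := by
    rw [← quadForm W hsym hnn hd v, heigv]
    simp only [dotProduct, Pi.smul_apply, smul_eq_mul]
    rw [show (∑ k, v k * (lam i1 * v k)) = lam i1 * ∑ k, v k * v k from by
      rw [Finset.mul_sum]; exact Finset.sum_congr rfl fun k _ => by ring]
    rw [hvnorm, mul_one]
  have hEu : energyW W fu = lam i0 := by
    rw [← quadForm W hsym hnn hd u, heigu]
    simp only [dotProduct, Pi.smul_apply, smul_eq_mul]
    rw [show (∑ k, u k * (lam i0 * u k)) = lam i0 * ∑ k, u k * u k from by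
      rw [Finset.mul_sum]; exact Finset.sum_congr rfl fun k _ => by ring]
    rw [hunorm, mul_one]
  have hlam1_nn : 0 ≤ lam i1 := hEv ▸ energy_nonneg W hnn fv
  have hlam0_nn : 0 ≤ lam i0 := hEu ▸ energy_nonneg W hnn fu
  have hvolpos : 0 < ∑ x, ∑ y, W x y := Finset.sum_pos (fun x _ => hd x) ⟨i0, Finset.mem_univ _⟩
  rcases eq_or_lt_of_le hlam1_nn with hlam1z | hlam1pos
  · -- λ₂ = 0 : contradiction with connectivity
    exfalso
    have hlam0z : lam i0 = 0 := le_antisymm (hlam1z ▸ hmono (by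
      rw [hi0, hi1]; exact Fin.mk_le_mk.2 (by norm_num))) hlam0_nn
    have hEvz : energyW W fv = 0 := by rw [hEv, ← hlam1z]
    have hEuz : energyW W fu = 0 := by rw [hEu, hlam0z]
    have hcv := const_of_energy_zero W hsym hnn hconn fv hEvz
    have hcu := const_of_energy_zero W hsym hnn hconn fu hEuz
    set cv := fv i0 with hcvdef
    set cu := fu i0 with hcudef
    have hvx : ∀ x, v x = cv * Real.sqrt (∑ z, W x z) := fun x => by
      rw [hvfv x, hcv x i0]
    have hux : ∀ x, u x = cu * Real.sqrt (∑ z, W x z) := fun x => by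
      rw [hufu x, hcu x i0]
    have hsum : ∀ x : Fin n, Real.sqrt (∑ z, W x z) * Real.sqrt (∑ z, W x z) = ∑ z, W x z :=
      fun x => Real.mul_self_sqrt (hd x).le
    set Svol := ∑ x, ∑ z : Fin n, W x z with hSvol
    have keyv : ∀ x, v x * v x = cv ^ 2 * (∑ z, W x z) := fun x => by
      rw [hvx x]
      calc (cv * Real.sqrt (∑ z, W x z)) * (cv * Real.sqrt (∑ z, W x z))
          = cv ^ 2 * (Real.sqrt (∑ z, W x z) * Real.sqrt (∑ z, W x z)) := by ring
        _ = cv ^ 2 * (∑ z, W x z) := by rw [hsum x]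
    have keyu : ∀ x, u x * u x = cu ^ 2 * (∑ z, W x z) := fun x => by
      rw [hux x]
      calc (cu * Real.sqrt (∑ z, W x z)) * (cu * Real.sqrt (∑ z, W x z))
          = cu ^ 2 * (Real.sqrt (∑ z, W x z) * Real.sqrt (∑ z, W x z)) := by ring
        _ = cu ^ 2 * (∑ z, W x z) := by rw [hsum x]
    have keyuv : ∀ x, u x * v x = cu * cv * (∑ z, W x z) := fun x => by
      rw [hux x, hvx x]
      calc (cu * Real.sqrt (∑ z, W x z)) * (cv * Real.sqrt (∑ z, W x z))
          = cu * cv * (Real.sqrt (∑ z, W x z) * Real.sqrt (∑ z, W x z)) := by ring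
        _ = cu * cv * (∑ z, W x z) := by rw [hsum x]
    have h1 : cv ^ 2 * Svol = 1 := by
      rw [← hvnorm, hSvol, Finset.mul_sum]
      exact (Finset.sum_congr rfl fun x _ => keyv x).symm
    have h2 : cu ^ 2 * Svol = 1 := by
      rw [← hunorm, hSvol, Finset.mul_sum]
      exact (Finset.sum_congr rfl fun x _ => keyu x).symm
    have h3 : cu * cv * Svol = 0 := by
      rw [← huv, hSvol, Finset.mul_sum]
      exact (Finset.sum_congr rfl fun x _ => keyuv x).symm
    nlinarith [h1, h2, h3]
  · -- λ₂ > 0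
    -- orthogonality to sqrt-degree vector
    set sq : Fin n → ℝ := fun x => Real.sqrt (∑ z, W x z) with hsq
    have hLs : normLap W *ᵥ sq = 0 := normLap_sqrtdeg W hd
    have hortho : ∑ x, sq x * v x = 0 := by
      have hsymm : (normLap W)ᵀ = normLap W := by
        have := hL
        rwa [Matrix.IsHermitian, Matrix.conjTranspose_eq_transpose_of_trivial] at this
      have h1 : sq ⬝ᵥ (normLap W *ᵥ v) = (normLap W *ᵥ sq) ⬝ᵥ v := by
        rw [Matrix.dotProduct_mulVec, ← Matrix.vecMul_transpose, hsymm]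
      rw [hLs, zero_dotProduct, heigv] at h1
      have h2 : sq ⬝ᵥ (lam i1 • v) = lam i1 * ∑ x, sq x * v x := by
        simp only [dotProduct, Pi.smul_apply, smul_eq_mul, Finset.mul_sum]
        exact Finset.sum_congr rfl fun k _ => by ring
      rw [h2] at h1
      exact (mul_eq_zero.1 h1).resolve_left hlam1pos.ne'
    have hsum : ∀ x : Fin n, Real.sqrt (∑ z, W x z) * Real.sqrt (∑ z, W x z) = ∑ z, W x z :=
      fun x => Real.mul_self_sqrt (hd x).le
    have hmean : ∑ x, (∑ z, W x z) * fv x = 0 := by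
      rw [← hortho]
      refine Finset.sum_congr rfl fun x _ => ?_
      show (∑ z, W x z) * fv x = Real.sqrt (∑ z, W x z) * v x
      calc (∑ z, W x z) * fv x
          = (Real.sqrt (∑ z, W x z) * Real.sqrt (∑ z, W x z)) * fv x := by rw [hsum x]
        _ = Real.sqrt (∑ z, W x z) * (fv x * Real.sqrt (∑ z, W x z)) := by ring
        _ = Real.sqrt (∑ z, W x z) * v x := by rw [← hvfv x]
    have hnorm1 : ∑ x, (∑ z, W x z) * fv x ^ 2 = 1 := by
      rw [← hvnorm]
      refine Finset.sum_congr rfl fun x _ => ?_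
      show (∑ z, W x z) * fv x ^ 2 = v x * v x
      rw [hvfv x]
      calc (∑ z, W x z) * fv x ^ 2
          = (Real.sqrt (∑ z, W x z) * Real.sqrt (∑ z, W x z)) * fv x ^ 2 := by rw [hsum x]
        _ = (fv x * Real.sqrt (∑ z, W x z)) * (fv x * Real.sqrt (∑ z, W x z)) := by ring
    show 2 / ((∑ x, ∑ y, W x y) * sSup {r | ∃ s t : Fin n, r = Reff W s t}) ≤ lam i1
    obtain ⟨a, _, ha⟩ := Finset.exists_max_image (Finset.univ : Finset (Fin n)) fv
      ⟨i0, Finset.mem_univ _⟩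
    obtain ⟨b, _, hbm⟩ := Finset.exists_min_image (Finset.univ : Finset (Fin n)) fv
      ⟨i0, Finset.mem_univ _⟩
    have hamax : ∀ x, fv x ≤ fv a := fun x => ha x (Finset.mem_univ x)
    have hbmin : ∀ x, fv b ≤ fv x := fun x => hbm x (Finset.mem_univ x)
    have hba : fv b < fv a := by
      rcases lt_or_ge (fv b) (fv a) with h | h
      · exact h
      · exfalso
        have hconst : ∀ x, fv x = fv a := fun x =>
          le_antisymm (hamax x) (le_trans h (hbmin x))
        have h0 : ∑ x, (∑ z, W x z) * fv x = fv a * ∑ x, ∑ z, W x z := by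
          rw [Finset.mul_sum]
          exact Finset.sum_congr rfl fun x _ => by rw [hconst x]; ring
        have hfa : fv a = 0 := by
          have hm := hmean
          rw [h0] at hm
          rcases mul_eq_zero.1 hm with h' | h'
          · exact h'
          · exact absurd h' hvolpos.ne'
        have hcontra : (1:ℝ) = 0 := by
          rw [← hnorm1]
          apply Finset.sum_eq_zero
          intro x _
          rw [hconst x, hfa]; ring
        norm_num at hcontra
    have hab : a ≠ b := fun h => hba.ne (by rw [h])
    set q : ℝ := (fv a - fv b) ^ 2 with hq
    have hqpos : 0 < q := by
      have : fv a - fv b ≠ 0 := sub_ne_zero.2 hba.ne'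
      positivity
    set c : ℝ := (fv a + fv b) / 2 with hc
    have hvar : 1 ≤ (∑ x, ∑ y, W x y) * (q / 4) := by
      have hterm : ∀ x, (∑ z, W x z) * (fv x - c) ^ 2 ≤ (∑ z, W x z) * (q / 4) := by
        intro x
        apply mul_le_mul_of_nonneg_left _ (hd x).le
        have h1 : fv x - c ≤ (fv a - fv b) / 2 := by
          have := hamax x; rw [hc]; linarith
        have h2 : -((fv a - fv b) / 2) ≤ fv x - c := by
          have := hbmin x; rw [hc]; linarith
        calc (fv x - c) ^ 2 ≤ ((fv a - fv b) / 2) ^ 2 := sq_le_sq' h2 h1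
          _ = q / 4 := by rw [hq]; ring
      have hexp : ∑ x, (∑ z, W x z) * (fv x - c) ^ 2
          = (∑ x, (∑ z, W x z) * fv x ^ 2) - 2 * c * (∑ x, (∑ z, W x z) * fv x)
            + c ^ 2 * (∑ x, ∑ z, W x z) := by
        rw [Finset.sum_congr rfl (fun x _ =>
          show (∑ z, W x z) * (fv x - c) ^ 2
            = (∑ z, W x z) * fv x ^ 2 - 2 * c * ((∑ z, W x z) * fv x)
              + c ^ 2 * (∑ z, W x z) from by ring)]
        rw [Finset.sum_add_distrib, Finset.sum_sub_distrib, ← Finset.mul_sum, ← Finset.mul_sum]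
      have hge : 1 ≤ ∑ x, (∑ z, W x z) * (fv x - c) ^ 2 := by
        rw [hexp, hmean, hnorm1]
        nlinarith [sq_nonneg c, hvolpos]
      calc (1:ℝ) ≤ ∑ x, (∑ z, W x z) * (fv x - c) ^ 2 := hge
        _ ≤ ∑ x, (∑ z, W x z) * (q / 4) := Finset.sum_le_sum fun x _ => hterm x
        _ = (∑ x, ∑ y, W x y) * (q / 4) := by rw [← Finset.sum_mul]
    have hbddB : BddBelow {q' | ∃ f : Fin n → ℝ, f a ≠ f b ∧ q' = energyW W f / (f a - f b) ^ 2} := by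
      refine ⟨0, ?_⟩
      rintro r ⟨g, hg, rfl⟩
      exact div_nonneg (energy_nonneg W hnn g) (sq_nonneg _)
    have hmem : lam i1 / q ∈ {q' | ∃ f : Fin n → ℝ, f a ≠ f b ∧ q' = energyW W f / (f a - f b) ^ 2} :=
      ⟨fv, hba.ne', by rw [hEv, hq]⟩
    have hCle : Ceff W a b ≤ lam i1 / q := csInf_le hbddB hmem
    obtain ⟨ε, hεpos, hεle⟩ := Ceff_lb W hsym hnn hconn hab
    have hCpos : 0 < Ceff W a b := by
      apply lt_of_lt_of_le hεpos
      apply le_csInf ⟨lam i1 / q, hmem⟩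
      rintro r ⟨g, hg, rfl⟩
      exact hεle g hg
    have hRfin : {r : ℝ | ∃ s t : Fin n, r = Reff W s t}.Finite := by
      apply Set.Finite.subset (Set.finite_range fun p : Fin n × Fin n => Reff W p.1 p.2)
      rintro r ⟨s, t, rfl⟩; exact ⟨(s, t), rfl⟩
    have hRle : Reff W a b ≤ sSup {r : ℝ | ∃ s t : Fin n, r = Reff W s t} :=
      le_csSup hRfin.bddAbove ⟨a, b, rfl⟩
    have hReff : Reff W a b = (Ceff W a b)⁻¹ := rfl
    set Rs := sSup {r : ℝ | ∃ s t : Fin n, r = Reff W s t} with hRs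
    have hRsuppos : 0 < Rs := lt_of_lt_of_le (by rw [hReff] at hRle ⊢; exact inv_pos.2 hCpos) hRle
    have hCq : Ceff W a b * q ≤ lam i1 := (le_div_iff₀ hqpos).1 hCle
    have hCR : 1 ≤ Ceff W a b * Rs := by
      calc (1:ℝ) = Ceff W a b * (Ceff W a b)⁻¹ := (mul_inv_cancel₀ hCpos.ne').symm
        _ ≤ Ceff W a b * Rs := mul_le_mul_of_nonneg_left (hReff ▸ hRle) hCpos.le
    have hq4 : 4 ≤ (∑ x, ∑ y, W x y) * q := by nlinarith [hvar]
    rw [div_le_iff₀ (mul_pos hvolpos hRsuppos)]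
    nlinarith [mul_le_mul hq4 hCR one_pos.le (mul_nonneg hvolpos.le hqpos.le),
      mul_le_mul_of_nonneg_right hCq (mul_nonneg hvolpos.le hRsuppos.le)]
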